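/- Let G be a graph of maximum degree at least 2, H a graph and v ∈ V(H). Then γ_I(G∘_v H) = n(G)·γ_I(H) if and only if γ_I(H − {v}) ≥ γ_I(H). -/

import Mathlib

open Finset

open scoped Classical

/-- An Italian dominating function on a finite simple graph: values in {0,1,2} and
every vertex with value 0 has neighbour values summing to at least 2. -/
noncomputable def IsIDF {α : Type*} [Fintype α] (G : SimpleGraph α) (f : α → ℕ) : Prop :=
  (∀ u, f u ≤ 2) ∧
    ∀ u, f u = 0 → 2 ≤ ∑ w ∈ Finset.univ.filter (fun w => G.Adj u w), f w

/-- The Italian domination number γ_I(G). -/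
noncomputable def italianNumber {α : Type*} [Fintype α] (G : SimpleGraph α) : ℕ :=
  sInf {n | ∃ f : α → ℕ, IsIDF G f ∧ ∑ u, f u = n}

/-- A γ_I(G)-function: an IDF on G of minimum weight. -/
noncomputable def IsMinIDF {α : Type*} [Fintype α] (G : SimpleGraph α) (f : α → ℕ) : Prop :=
  IsIDF G f ∧ ∑ u, f u = italianNumber G

/-- D is a dominating set of G. -/
def IsDomSet {α : Type*} (G : SimpleGraph α) (D : Set α) : Prop :=
  ∀ u ∉ D, ∃ w ∈ D, G.Adj u w

/-- The domination number γ(G). -/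
noncomputable def dominationNumber {α : Type*} [Fintype α] (G : SimpleGraph α) : ℕ :=
  sInf {n | ∃ D : Finset α, IsDomSet G ↑D ∧ D.card = n}

/-- The degree of a vertex. -/
noncomputable def deg {α : Type*} [Fintype α] (G : SimpleGraph α) (u : α) : ℕ :=
  (Finset.univ.filter (fun w => G.Adj u w)).card

/-- The rooted product G∘_v H: one copy of H for each vertex of G, the root v of the
x-th copy being identified with the vertex x of G. The pair (x, y) is the vertex y of
the x-th copy of H; in particular (x, v) is the vertex x of G. -/
def rootedProd {α β : Type*} (G : SimpleGraph α) (H : SimpleGraph β) (v : β) :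
    SimpleGraph (α × β) where
  Adj p q := (p.1 = q.1 ∧ H.Adj p.2 q.2) ∨ (p.2 = v ∧ q.2 = v ∧ G.Adj p.1 q.1)
  symm := by
    constructor
    rintro ⟨x, y⟩ ⟨x', y'⟩ (⟨h1, h2⟩ | ⟨h1, h2, h3⟩)
    · exact Or.inl ⟨h1.symm, h2.symm⟩
    · exact Or.inr ⟨h2, h1, h3.symm⟩
  loopless := by
    constructor
    rintro ⟨x, y⟩ (⟨_, h⟩ | ⟨_, _, h⟩)
    · exact H.loopless.irrefl _ h
    · exact G.loopless.irrefl _ h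

/-- The weight ω(f_x) of the restriction of f to the copy H_x. -/
def copyWeight {α β : Type*} [Fintype β] (f : α × β → ℕ) (x : α) : ℕ :=
  ∑ y, f (x, y)

/-- The graph H − {v} obtained from H by deleting the vertex v. -/
def deleteVertex {β : Type*} (H : SimpleGraph β) (v : β) : SimpleGraph {w : β // w ≠ v} :=
  SimpleGraph.induce {w : β | w ≠ v} H

set_option linter.unusedSectionVars false
set_option linter.unusedVariables false

section Aux
variable {α β : Type*} [Fintype α] [Fintype β] (G : SimpleGraph α) (H : SimpleGraph β) (v : β)

lemma idf_one {α : Type*} [Fintype α] (G : SimpleGraph α) : IsIDF G (fun _ => 1) :=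
  ⟨fun _ => one_le_two, fun _ h => by simp at h⟩

lemma setNonempty {α : Type*} [Fintype α] (G : SimpleGraph α) :
    {n | ∃ f : α → ℕ, IsIDF G f ∧ ∑ u, f u = n}.Nonempty :=
  ⟨_, fun _ => 1, idf_one G, rfl⟩

lemma italian_le {α : Type*} [Fintype α] {G : SimpleGraph α} {f : α → ℕ} (hf : IsIDF G f) :
    italianNumber G ≤ ∑ u, f u :=
  Nat.sInf_le ⟨f, hf, rfl⟩

lemma exists_min {α : Type*} [Fintype α] (G : SimpleGraph α) :
    ∃ f : α → ℕ, IsIDF G f ∧ ∑ u, f u = italianNumber G :=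
  Nat.sInf_mem (setNonempty G)

section Rooted
variable {α β : Type*} [Fintype α] [Fintype β] (G : SimpleGraph α) (H : SimpleGraph β) (v : β)

lemma image_sum (f : α × β → ℕ) (x : α) (y : β) :
    ∑ p ∈ ((univ.filter (fun w => H.Adj y w)).image (fun w => (x, w))), f p
      = ∑ w ∈ univ.filter (fun w => H.Adj y w), f (x, w) :=
  Finset.sum_image (fun a _ b _ h => (Prod.mk.injEq _ _ _ _ ▸ h).2)

lemma image_subset_nbhd (x : α) (y : β) :
    ((univ.filter (fun w => H.Adj y w)).image (fun w => (x, w)))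
      ⊆ univ.filter (fun p => (rootedProd G H v).Adj (x, y) p) := by
  intro p hp
  simp only [mem_image, mem_filter, mem_univ, true_and] at hp ⊢
  obtain ⟨w, hw, rfl⟩ := hp
  exact Or.inl ⟨rfl, hw⟩

lemma copy_sum_le (f : α × β → ℕ) (x : α) (y : β) :
    ∑ w ∈ univ.filter (fun w => H.Adj y w), f (x, w)
      ≤ ∑ p ∈ univ.filter (fun p => (rootedProd G H v).Adj (x, y) p), f p := by
  rw [← image_sum H f x y]
  exact Finset.sum_le_sum_of_subset (image_subset_nbhd G H v x y)

lemma nbhd_eq (x : α) {y : β} (hy : y ≠ v) :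
    (univ.filter (fun p => (rootedProd G H v).Adj (x, y) p))
      = ((univ.filter (fun w => H.Adj y w)).image (fun w => (x, w))) := by
  ext ⟨x', w⟩
  simp only [mem_image, mem_filter, mem_univ, true_and]
  show (x = x' ∧ H.Adj y w) ∨ (y = v ∧ w = v ∧ G.Adj x x') ↔ _
  constructor
  · rintro (⟨rfl, h⟩ | ⟨h, _, _⟩)
    · exact ⟨w, h, rfl⟩
    · exact absurd h hy
  · rintro ⟨w', hw', h⟩
    obtain ⟨rfl, rfl⟩ := Prod.mk.injEq _ _ _ _ ▸ h
    exact Or.inl ⟨rfl, hw'⟩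

lemma nbhd_sum_eq (f : α × β → ℕ) (x : α) {y : β} (hy : y ≠ v) :
    ∑ p ∈ univ.filter (fun p => (rootedProd G H v).Adj (x, y) p), f p
      = ∑ w ∈ univ.filter (fun w => H.Adj y w), f (x, w) := by
  rw [nbhd_eq G H v x hy, image_sum]

lemma del_weight (g : β → ℕ) (hg : g v = 0) :
    ∑ w : {w : β // w ≠ v}, g ↑w = ∑ w, g w := by
  rw [← Finset.sum_filter_add_sum_filter_not univ (fun w => w ≠ v) g]
  have h2 : ∑ w ∈ univ.filter (fun w => ¬ w ≠ v), g w = 0 := by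
    apply Finset.sum_eq_zero
    intro w hw
    simp only [mem_filter, not_not] at hw
    rw [hw.2, hg]
  rw [h2, add_zero]
  exact (Finset.sum_subtype _ (by simp) g).symm

lemma del_nbhd_sum (g : β → ℕ) (hg : g v = 0) {y : β} (hy : y ≠ v) :
    ∑ w ∈ univ.filter (fun w : {w : β // w ≠ v} => (deleteVertex H v).Adj ⟨y, hy⟩ w), g ↑w
      = ∑ w ∈ univ.filter (fun w => H.Adj y w), g w := by
  have key : ∀ w : {w : β // w ≠ v}, (deleteVertex H v).Adj ⟨y, hy⟩ w ↔ H.Adj y ↑w :=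
    fun w => Iff.rfl
  rw [Finset.sum_filter, Finset.sum_filter]
  have := del_weight v (fun w => if H.Adj y w then g w else 0) (by simp [hg])
  rw [← this]
  exact Finset.sum_congr rfl fun w _ => by simp [key]

/-- Part A: always γ_I(G∘H) ≤ n(G)γ_I(H). -/
lemma partA : italianNumber (rootedProd G H v) ≤ Fintype.card α * italianNumber H := by
  obtain ⟨fH, hfH, hwH⟩ := exists_min H
  have hidf : IsIDF (rootedProd G H v) (fun p => fH p.2) := by
    refine ⟨fun p => hfH.1 p.2, ?_⟩
    rintro ⟨x, y⟩ h0
    calc 2 ≤ ∑ w ∈ univ.filter (fun w => H.Adj y w), fH w := hfH.2 y h0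
    _ ≤ _ := copy_sum_le G H v (fun p => fH p.2) x y
  have := italian_le hidf
  calc italianNumber (rootedProd G H v) ≤ ∑ p : α × β, fH p.2 := this
  _ = Fintype.card α * italianNumber H := by
      rw [Fintype.sum_prod_type]
      simp [hwH, Finset.sum_const, smul_eq_mul]

/-- Part B: if γ_I(H) ≤ γ_I(H−v) then per-copy weight ≥ γ_I(H). -/
lemma partB (hle : italianNumber H ≤ italianNumber (deleteVertex H v))
    {f : α × β → ℕ} (hf : IsIDF (rootedProd G H v) f) (x : α) :
    italianNumber H ≤ copyWeight f x := by
  by_cases hx : IsIDF H (fun y => f (x, y))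
  · exact italian_le hx
  · have hb : ∀ y, f (x, y) ≤ 2 := fun y => hf.1 (x, y)
    have hdom : ∃ y, f (x, y) = 0 ∧
        ∑ w ∈ univ.filter (fun w => H.Adj y w), f (x, w) < 2 := by
      by_contra hc
      push_neg at hc
      exact hx ⟨hb, fun y h0 => hc y h0⟩
    obtain ⟨y, hy0, hylt⟩ := hdom
    have hyv : y = v := by
      by_contra hyv
      have := hf.2 (x, y) hy0
      rw [nbhd_sum_eq G H v f x hyv] at this
      omega
    have hv0 : f (x, v) = 0 := hyv ▸ hy0
    -- restriction to H − v is an IDF on H − v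
    have hgidf : IsIDF (deleteVertex H v) (fun w => f (x, ↑w)) := by
      refine ⟨fun w => hb ↑w, ?_⟩
      rintro ⟨y', hy'⟩ h0
      have h2 := hf.2 (x, y') h0
      rw [nbhd_sum_eq G H v f x hy'] at h2
      calc 2 ≤ ∑ w ∈ univ.filter (fun w => H.Adj y' w), f (x, w) := h2
      _ = ∑ w ∈ univ.filter
            (fun w : {w : β // w ≠ v} => (deleteVertex H v).Adj ⟨y', hy'⟩ w), f (x, ↑w) :=
          (del_nbhd_sum H v (fun w => f (x, w)) hv0 hy').symm
    have h3 := italian_le hgidf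
    have h4 : ∑ w : {w : β // w ≠ v}, f (x, ↑w) = ∑ w, f (x, w) :=
      del_weight v (fun w => f (x, w)) hv0
    calc italianNumber H ≤ italianNumber (deleteVertex H v) := hle
    _ ≤ ∑ w : {w : β // w ≠ v}, f (x, ↑w) := h3
    _ = copyWeight f x := h4

end Rooted

section Rooted2
variable {α β : Type*} [Fintype α] [Fintype β] (G : SimpleGraph α) (H : SimpleGraph β) (v : β)

/-- Part C: if γ_I(H−v) < γ_I(H) and G has a vertex of degree ≥ 2 then
γ_I(G∘H) < n(G)γ_I(H). -/
lemma partC [Nonempty α] {u : α} (hu : 2 ≤ deg G u)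
    (hlt : italianNumber (deleteVertex H v) < italianNumber H) :
    italianNumber (rootedProd G H v) < Fintype.card α * italianNumber H := by
  obtain ⟨f', hf', hw'⟩ := exists_min (deleteVertex H v)
  -- extension of f' to β, vanishing at v
  set g0 : β → ℕ := fun w => if h : w = v then 0 else f' ⟨w, h⟩ with hg0def
  have hg0v : g0 v = 0 := by simp [hg0def]
  have hg0w : ∀ w : {w : β // w ≠ v}, g0 ↑w = f' w := by
    rintro ⟨w, hw⟩; simp [hg0def, hw]
  -- the IDF on the rooted product
  set F : α × β → ℕ :=
    fun p => if p.2 = v then (if p.1 = u then 0 else 1) else g0 p.2 with hFdef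
  have hFidf : IsIDF (rootedProd G H v) F := by
    constructor
    · rintro ⟨x, y⟩
      by_cases hy : y = v
      · simp only [hFdef, hy, if_pos]
        split <;> omega
      · simp only [hFdef, if_neg hy]
        by_cases h : y = v
        · exact absurd h hy
        · simp only [hg0def, dif_neg h]
          exact hf'.1 _
    · rintro ⟨x, y⟩ h0
      by_cases hy : y = v
      · have hx : x = u := by
          by_contra hx
          simp [hFdef, hy, hx] at h0
        -- the root is dominated by two G-neighbours
        set S : Finset (α × β) := (univ.filter (fun x' => G.Adj u x')).image
          (fun x' => (x', v)) with hSdef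
        have hSsub : S ⊆ univ.filter (fun p => (rootedProd G H v).Adj (u, v) p) := by
          intro p hp
          simp only [hSdef, mem_image, mem_filter, mem_univ, true_and] at hp ⊢
          obtain ⟨x', hx', rfl⟩ := hp
          exact Or.inr ⟨rfl, rfl, hx'⟩
        have hSsum : ∑ p ∈ S, F p = deg G u := by
          rw [hSdef, Finset.sum_image (fun a _ b _ h => congrArg Prod.fst h)]
          rw [show deg G u = ∑ x' ∈ univ.filter (fun x' => G.Adj u x'), 1 by
            simp [deg]]
          apply Finset.sum_congr rfl
          intro x' hx'
          simp only [mem_filter, mem_univ, true_and] at hx'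
          have : x' ≠ u := fun h => G.loopless.irrefl u (h ▸ hx')
          simp [hFdef, this]
        calc 2 ≤ deg G u := hu
        _ = ∑ p ∈ S, F p := hSsum.symm
        _ ≤ ∑ p ∈ univ.filter (fun p => (rootedProd G H v).Adj (u, v) p), F p :=
            Finset.sum_le_sum_of_subset hSsub
        _ = _ := by rw [hx, hy]
      · -- inside a copy of H − v
        have hf0 : f' ⟨y, hy⟩ = 0 := by
          have := h0
          simp only [hFdef, if_neg hy, hg0def, dif_neg hy] at this
          exact this
        have h2 := hf'.2 ⟨y, hy⟩ hf0
        have h3 : ∑ w ∈ univ.filter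
            (fun w : {w : β // w ≠ v} => (deleteVertex H v).Adj ⟨y, hy⟩ w), f' w
            = ∑ w ∈ univ.filter (fun w => H.Adj y w), g0 w := by
          rw [← del_nbhd_sum H v g0 hg0v hy]
          exact Finset.sum_congr rfl fun w _ => (hg0w w).symm
        have h4 : ∑ w ∈ univ.filter (fun w => H.Adj y w), g0 w
            ≤ ∑ w ∈ univ.filter (fun w => H.Adj y w), F (x, w) := by
          apply Finset.sum_le_sum
          intro w _
          by_cases hw : w = v
          · simp [hw, hg0v]
          · simp [hFdef, hw]
        calc 2 ≤ _ := h2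
        _ = ∑ w ∈ univ.filter (fun w => H.Adj y w), g0 w := h3
        _ ≤ ∑ w ∈ univ.filter (fun w => H.Adj y w), F (x, w) := h4
        _ ≤ _ := copy_sum_le G H v F x y
  -- weight of F
  have hg0sum : ∑ w, g0 w = italianNumber (deleteVertex H v) := by
    rw [← del_weight v g0 hg0v, ← hw']
    exact Finset.sum_congr rfl fun w _ => hg0w w
  have hcopy : ∀ x : α, ∑ y, F (x, y)
      = (if x = u then 0 else 1) + italianNumber (deleteVertex H v) := by
    intro x
    have : ∀ y : β, F (x, y) = (if y = v then (if x = u then 0 else 1) else 0) + g0 y := by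
      intro y
      by_cases hy : y = v
      · simp [hFdef, hy, hg0v]
      · simp [hFdef, hy]
    rw [Finset.sum_congr rfl fun y _ => this y, Finset.sum_add_distrib,
      Finset.sum_ite_eq' univ v (fun _ => if x = u then 0 else 1), hg0sum]
    simp
  set n := Fintype.card α
  set γ := italianNumber H
  set γ' := italianNumber (deleteVertex H v)
  have hW : ∑ p : α × β, F p = (n - 1) + n * γ' := by
    rw [Fintype.sum_prod_type]
    rw [Finset.sum_congr rfl fun x _ => hcopy x, Finset.sum_add_distrib]
    congr 1
    · rw [← Finset.sum_erase_add univ _ (mem_univ u)]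
      simp only [if_pos rfl, add_zero]
      rw [Finset.sum_congr rfl (fun x hx => if_neg (Finset.ne_of_mem_erase hx))]
      simp [Finset.card_erase_of_mem, n]
    · simp [mul_comm, n]
  have hle := italian_le hFidf
  rw [hW] at hle
  have hn : 1 ≤ n := Fintype.card_pos
  have hmul : n * (γ' + 1) ≤ n * γ := Nat.mul_le_mul_left n hlt
  have : (n - 1) + n * γ' < n * γ := by
    rw [Nat.mul_add, Nat.mul_one] at hmul
    omega
  omega

end Rooted2

end Aux

/-- Theorem: for G of maximum degree at least 2,
γ_I(G∘_v H) = n(G)γ_I(H) iff γ_I(H − {v}) ≥ γ_I(H). -/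
theorem stmt13 {α β : Type*} [Fintype α] [Nonempty α] [Fintype β]
    (G : SimpleGraph α) (hG : ∃ u : α, 2 ≤ deg G u)
    (H : SimpleGraph β) (v : β) :
    italianNumber (rootedProd G H v) = Fintype.card α * italianNumber H ↔
      italianNumber H ≤ italianNumber (deleteVertex H v) := by
  constructor
  · intro heq
    by_contra hlt
    push_neg at hlt
    obtain ⟨u, hu⟩ := hG
    exact absurd heq (Nat.ne_of_lt (partC G H v hu hlt))
  · intro hle
    refine le_antisymm (partA G H v) ?_
    obtain ⟨F, hF, hsum⟩ := exists_min (rootedProd G H v)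
    rw [← hsum]
    have : ∀ x : α, italianNumber H ≤ copyWeight F x := partB G H v hle hF
    calc Fintype.card α * italianNumber H
        = ∑ _x : α, italianNumber H := by simp [mul_comm]
    _ ≤ ∑ x : α, copyWeight F x := Finset.sum_le_sum fun x _ => this x
    _ = ∑ p : α × β, F p := by rw [Fintype.sum_prod_type]; rfl
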